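/- Let f: ℝⁿ → ℝ be convex, x̄ ∈ ℝⁿ with f(x̄) = 0 and 0 ∉ ∂f(x̄), and let γ₂ < d(0, ∂f(x̄)) / sup{‖y‖ : y ∈ ∂f(x̄)}. Then there exists ε > 0 such that for all x with ‖x - x̄‖ < ε, f(x) > 0, and d((x - x̄)/‖x - x̄‖, N_{f⁻¹((-∞,0])}(x̄)) < ε, one has ⟨y/‖y‖, (x - x̄)/‖x - x̄‖⟩ > γ₂ for every y ∈ ∂f(x). -/

import Mathlib

open RealInnerProductSpace

/-- The convex subdifferential of `f` at `x`. -/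
def subdiff {n : ℕ} (f : EuclideanSpace ℝ (Fin n) → ℝ) (x : EuclideanSpace ℝ (Fin n)) :
    Set (EuclideanSpace ℝ (Fin n)) :=
  {y | ∀ z, f x + ⟪y, z - x⟫ ≤ f z}

/-- The normal cone of a convex set `C` at `x`. -/
def normalCone {n : ℕ} (C : Set (EuclideanSpace ℝ (Fin n))) (x : EuclideanSpace ℝ (Fin n)) :
    Set (EuclideanSpace ℝ (Fin n)) :=
  {v | ∀ y ∈ C, ⟪v, y - x⟫ ≤ 0}

namespace IIT2

variable {n : ℕ}

local notation "E" => EuclideanSpace ℝ (Fin n)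

lemma isClosed_subdiff (f : E → ℝ) (x : E) : IsClosed (subdiff f x) := by
  have h : subdiff f x = ⋂ z, {y : E | f x + ⟪y, z - x⟫ ≤ f z} := by
    ext y; simp [subdiff, Set.mem_iInter]
  rw [h]
  exact isClosed_iInter fun z =>
    isClosed_le (continuous_const.add (continuous_id.inner continuous_const)) continuous_const

lemma convex_subdiff (f : E → ℝ) (x : E) : Convex ℝ (subdiff f x) := by
  intro y₁ h₁ y₂ h₂ a b ha hb hab
  intro z
  have e : ⟪a • y₁ + b • y₂, z - x⟫ = a * ⟪y₁, z - x⟫ + b * ⟪y₂, z - x⟫ := by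
    rw [inner_add_left, real_inner_smul_left, real_inner_smul_left]
  show f x + ⟪a • y₁ + b • y₂, z - x⟫ ≤ f z
  rw [e]
  have k1 := mul_le_mul_of_nonneg_left (h₁ z) ha
  have k2 := mul_le_mul_of_nonneg_left (h₂ z) hb
  have : a * f z + b * f z = f z := by rw [← add_mul, hab, one_mul]
  have : a * f x + b * f x = f x := by rw [← add_mul, hab, one_mul]
  nlinarith [k1, k2]

section DirDeriv

noncomputable def hdq (f : E → ℝ) (xb : E) (d : E) : ℝ :=
  ⨅ t : Set.Ioi (0:ℝ), f (xb + (t : ℝ) • d) / (t : ℝ)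

variable {f : EuclideanSpace ℝ (Fin n) → ℝ} {xb : EuclideanSpace ℝ (Fin n)}
variable (hconv : ConvexOn ℝ Set.univ f) (hf0 : f xb = 0)
include hconv hf0

lemma quot_lb (d : E) {t : ℝ} (ht : 0 < t) : -(f (xb - d)) ≤ f (xb + t • d) / t := by
  have h1 : t + 1 ≠ 0 := by positivity
  have hcomb : (t/(t+1)) • (xb - d) + (1/(t+1)) • (xb + t • d) = xb := by
    match_scalars <;> field_simp <;> ring
  have key := hconv.2 (Set.mem_univ (xb - d)) (Set.mem_univ (xb + t • d))
    (by positivity : (0:ℝ) ≤ t/(t+1)) (by positivity : (0:ℝ) ≤ 1/(t+1))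
    (by field_simp)
  rw [hcomb, hf0] at key
  simp only [smul_eq_mul] at key
  rw [le_div_iff₀ ht]
  have h2 : (0:ℝ) < t + 1 := by positivity
  have h3 := mul_le_mul_of_nonneg_right key h2.le
  rw [zero_mul, add_mul] at h3
  have e1 : t/(t+1) * f (xb - d) * (t+1) = t * f (xb - d) := by field_simp
  have e2 : 1/(t+1) * f (xb + t • d) * (t+1) = f (xb + t • d) := by field_simp
  rw [e1, e2] at h3
  nlinarith

lemma quot_mono (d : E) {s t : ℝ} (hs : 0 < s) (hst : s ≤ t) :
    f (xb + s • d) / s ≤ f (xb + t • d) / t := by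
  have ht : 0 < t := hs.trans_le hst
  have hcomb : (1 - s/t) • xb + (s/t) • (xb + t • d) = xb + s • d := by
    rw [smul_add, smul_smul, sub_smul, one_smul]
    have : s/t * t = s := by field_simp
    rw [this]; abel
  have key := hconv.2 (Set.mem_univ xb) (Set.mem_univ (xb + t • d))
    (by
      have : s/t ≤ 1 := by rw [div_le_one ht]; exact hst
      linarith : (0:ℝ) ≤ 1 - s/t)
    (by positivity : (0:ℝ) ≤ s/t) (by ring)
  rw [hcomb, hf0] at key
  simp only [smul_eq_mul, mul_zero, zero_add] at key
  rw [div_le_div_iff₀ hs ht]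
  have h3 := mul_le_mul_of_nonneg_right key ht.le
  have e1 : s/t * f (xb + t • d) * t = f (xb + t • d) * s := by field_simp
  rw [e1] at h3
  linarith

lemma bddBelow_hdq (d : E) :
    BddBelow (Set.range fun t : Set.Ioi (0:ℝ) => f (xb + (t:ℝ) • d) / (t:ℝ)) := by
  refine ⟨-(f (xb - d)), ?_⟩
  rintro _ ⟨t, rfl⟩
  exact quot_lb hconv hf0 d t.2

lemma hdq_le (d : E) {t : ℝ} (ht : 0 < t) : hdq f xb d ≤ f (xb + t • d) / t :=
  ciInf_le (bddBelow_hdq hconv hf0 d) ⟨t, ht⟩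

lemma hdq_zero : hdq f xb 0 = 0 := by
  have : ∀ t : Set.Ioi (0:ℝ), f (xb + (t:ℝ) • (0:E)) / (t:ℝ) = 0 := by
    intro t; rw [smul_zero, add_zero, hf0, zero_div]
  unfold hdq
  rw [iInf_congr this, ciInf_const]

lemma hdq_smul_le (c : ℝ) (hc : 0 < c) (d : E) : hdq f xb (c • d) ≤ c * hdq f xb d := by
  have h : hdq f xb (c • d) / c ≤ hdq f xb d := by
    unfold hdq
    refine le_ciInf ?_
    rintro ⟨t, ht⟩
    have ht : (0:ℝ) < t := ht
    simp only
    rw [div_le_iff₀ hc]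
    have key := hdq_le hconv hf0 (c • d) (show (0:ℝ) < t / c by positivity)
    have e1 : xb + (t/c) • (c • d) = xb + t • d := by
      rw [smul_smul]
      congr 2
      field_simp
    rw [e1] at key
    unfold hdq at key
    refine key.trans (le_of_eq ?_)
    field_simp
  calc hdq f xb (c • d) = hdq f xb (c • d) / c * c := by field_simp
    _ ≤ hdq f xb d * c := mul_le_mul_of_nonneg_right h hc.le
    _ = c * hdq f xb d := mul_comm _ _

lemma hdq_smul (c : ℝ) (hc : 0 < c) (d : E) : hdq f xb (c • d) = c * hdq f xb d := by
  refine le_antisymm (hdq_smul_le hconv hf0 c hc d) ?_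
  have h2 := hdq_smul_le hconv hf0 c⁻¹ (by positivity) (c • d)
  rw [smul_smul, inv_mul_cancel₀ hc.ne', one_smul] at h2
  calc c * hdq f xb d ≤ c * (c⁻¹ * hdq f xb (c • d)) :=
        mul_le_mul_of_nonneg_left h2 hc.le
    _ = hdq f xb (c • d) := by field_simp

lemma hdq_add (a b : E) : hdq f xb (a + b) ≤ hdq f xb a + hdq f xb b := by
  refine le_of_forall_pos_le_add ?_
  intro ε hε
  obtain ⟨⟨t₁, ht₁⟩, h₁⟩ := exists_lt_of_ciInf_lt
    (show hdq f xb a < hdq f xb a + ε/2 by linarith)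
  obtain ⟨⟨t₂, ht₂⟩, h₂⟩ := exists_lt_of_ciInf_lt
    (show hdq f xb b < hdq f xb b + ε/2 by linarith)
  have ht₁ : (0:ℝ) < t₁ := ht₁
  have ht₂ : (0:ℝ) < t₂ := ht₂
  simp only at h₁ h₂
  set t := min t₁ t₂ with htdef
  have ht : 0 < t := lt_min ht₁ ht₂
  have key : f (xb + (t/2) • (a + b)) / (t/2) ≤ f (xb + t • a) / t + f (xb + t • b) / t := by
    have hcomb : (1/2 : ℝ) • (xb + t • a) + (1/2 : ℝ) • (xb + t • b) = xb + (t/2) • (a + b) := by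
      match_scalars <;> ring
    have hk := hconv.2 (Set.mem_univ (xb + t • a)) (Set.mem_univ (xb + t • b))
      (by norm_num : (0:ℝ) ≤ 1/2) (by norm_num : (0:ℝ) ≤ 1/2) (by norm_num)
    rw [hcomb] at hk
    simp only [smul_eq_mul] at hk
    rw [← add_div, div_le_div_iff₀ (by positivity) ht]
    nlinarith
  have mono1 : f (xb + t • a) / t ≤ f (xb + t₁ • a) / t₁ :=
    quot_mono hconv hf0 a ht (min_le_left _ _)
  have mono2 : f (xb + t • b) / t ≤ f (xb + t₂ • b) / t₂ :=
    quot_mono hconv hf0 b ht (min_le_right _ _)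
  have hle : hdq f xb (a + b) ≤ f (xb + (t/2) • (a + b)) / (t/2) :=
    hdq_le hconv hf0 (a + b) (by positivity)
  linarith

/-- Max formula half: there is a subgradient attaining at least the directional quotient inf. -/
lemma exists_subgrad (e : E) (he : e ≠ (0:E)) :
    ∃ w, w ∈ subdiff f xb ∧ hdq f xb e ≤ ⟪w, e⟫ := by
  classical
  set N : E → ℝ := hdq f xb with hN
  have N_hom : ∀ c : ℝ, 0 < c → ∀ x : E, N (c • x) = c * N x := fun c hc x =>
    hdq_smul hconv hf0 c hc x
  have N_add : ∀ x y : E, N (x + y) ≤ N x + N y := fun x y => hdq_add hconv hf0 x y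
  set p : EuclideanSpace ℝ (Fin n) →ₗ.[ℝ] ℝ := LinearPMap.mkSpanSingleton e (N e) he with hp
  have hf : ∀ x : p.domain, p x ≤ N x := by
    rintro ⟨x, hx⟩
    have hx' : x ∈ Submodule.span ℝ {e} := hx
    obtain ⟨c, rfl⟩ := Submodule.mem_span_singleton.1 hx'
    have happ : p ⟨c • e, hx⟩ = c • N e := LinearPMap.mkSpanSingleton'_apply e (N e) _ c hx
    rw [happ]
    simp only [smul_eq_mul]
    rcases lt_trichotomy c 0 with hc | hc | hc
    · have h1 : N (c • e) = (-c) * N (-e) := by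
        have : c • e = (-c) • (-e) := by simp
        rw [this, N_hom (-c) (by linarith) (-e)]
      have h2 : 0 ≤ N e + N (-e) := by
        have := N_add e (-e)
        rw [add_neg_cancel] at this
        have h0 : N 0 = 0 := hdq_zero hconv hf0
        linarith
      rw [h1]
      nlinarith
    · subst hc
      simp only [zero_smul, zero_mul]
      rw [show N (0 : EuclideanSpace ℝ (Fin n)) = 0 from hdq_zero hconv hf0]
    · rw [N_hom c hc e]
  obtain ⟨g, hg_eq, hg_le⟩ := exists_extension_of_le_sublinear p N N_hom N_add hf
  have hgcont : Continuous g := g.continuous_of_finiteDimensional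
  set w : EuclideanSpace ℝ (Fin n) :=
    (InnerProductSpace.toDual ℝ (EuclideanSpace ℝ (Fin n))).symm ⟨g, hgcont⟩ with hw
  have hwv : ∀ v : EuclideanSpace ℝ (Fin n), ⟪w, v⟫ = g v := fun v =>
    InnerProductSpace.toDual_symm_apply
  refine ⟨w, ?_, ?_⟩
  · intro z
    rw [hf0, zero_add, hwv]
    calc g (z - xb) ≤ N (z - xb) := hg_le _
      _ ≤ f (xb + (1:ℝ) • (z - xb)) / 1 := hdq_le hconv hf0 _ one_pos
      _ = f z := by rw [one_smul, div_one, add_sub_cancel]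
  · rw [hwv]
    have hes : e ∈ Submodule.span ℝ ({e} : Set (EuclideanSpace ℝ (Fin n))) :=
      Submodule.mem_span_singleton_self e
    have := hg_eq ⟨e, hes⟩
    rw [LinearPMap.mkSpanSingleton_apply] at this
    rw [this]

/-- If all subgradients at `xb` have negative inner product with `e`, then `f` descends. -/
lemma descent (e : E) (he : e ≠ (0:E))
    (hS : ∀ w ∈ subdiff f xb, ⟪w, e⟫ < 0) :
    ∃ t : ℝ, 0 < t ∧ f (xb + t • e) < 0 := by
  obtain ⟨w, hw, hwe⟩ := exists_subgrad hconv hf0 e he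
  have hlt : hdq f xb e < 0 := lt_of_le_of_lt hwe (hS w hw)
  obtain ⟨⟨t, ht⟩, hqt⟩ := exists_lt_of_ciInf_lt hlt
  have ht : (0:ℝ) < t := ht
  simp only at hqt
  exact ⟨t, ht, by
    have := hqt
    rw [div_lt_iff₀ ht, zero_mul] at this
    exact this⟩

end DirDeriv

section Cone

variable {f : EuclideanSpace ℝ (Fin n) → ℝ} {xb : EuclideanSpace ℝ (Fin n)}

/-- The cone generated by the subdifferential (including 0). -/
def Kset (f : EuclideanSpace ℝ (Fin n) → ℝ) (xb : EuclideanSpace ℝ (Fin n)) :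
    Set (EuclideanSpace ℝ (Fin n)) :=
  {x | ∃ t : ℝ, 0 ≤ t ∧ ∃ w ∈ subdiff f xb, x = t • w}

lemma zero_mem_Kset (hne : (subdiff f xb).Nonempty) : (0:E) ∈ Kset f xb := by
  obtain ⟨w, hw⟩ := hne
  exact ⟨0, le_refl 0, w, hw, (zero_smul ℝ w).symm⟩

lemma convex_Kset (hne : (subdiff f xb).Nonempty) : Convex ℝ (Kset f xb) := by
  rintro x ⟨t₁, ht₁, w₁, hw₁, rfl⟩ y ⟨t₂, ht₂, w₂, hw₂, rfl⟩ a b ha hb hab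
  set τ := a * t₁ + b * t₂ with hτ
  have hτ0 : 0 ≤ τ := by positivity
  rcases eq_or_lt_of_le hτ0 with hτz | hτpos
  · have h1 : a * t₁ = 0 := by nlinarith
    have h2 : b * t₂ = 0 := by nlinarith
    have : a • t₁ • w₁ + b • t₂ • w₂ = (0:E) := by
      rw [smul_smul, smul_smul, h1, h2, zero_smul, zero_smul, add_zero]
    rw [this]
    exact zero_mem_Kset hne
  · refine ⟨τ, hτ0, (a * t₁ / τ) • w₁ + (b * t₂ / τ) • w₂, ?_, ?_⟩
    · exact convex_subdiff f xb hw₁ hw₂ (by positivity) (by positivity)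
        (by field_simp; linarith)
    · rw [smul_add, smul_smul, smul_smul, smul_smul, smul_smul]
      congr 2 <;> field_simp <;> ring
lemma isClosed_Kset (h0 : (0:E) ∉ subdiff f xb) (hcpt : IsCompact (subdiff f xb)) :
    IsClosed (Kset f xb)  := by
  rcases Set.eq_empty_or_nonempty (subdiff f xb) with hE | hne
  · have : Kset f xb = ∅ := by
      ext x
      simp [Kset, hE]
    rw [this]; exact isClosed_empty
  have hScl : IsClosed (subdiff f xb) := isClosed_subdiff f xb
  set m := Metric.infDist (0:E) (subdiff f xb) with hm
  have hm0 : 0 < m := by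
    rcases lt_or_eq_of_le (Metric.infDist_nonneg : 0 ≤ m) with h | h
    · exact h
    · exact absurd ((hScl.mem_iff_infDist_zero hne).2 h.symm) h0
  have hmle : ∀ w ∈ subdiff f xb, m ≤ ‖w‖ := by
    intro w hw
    simpa using Metric.infDist_le_dist_of_mem (x := (0:E)) hw
  refine IsSeqClosed.isClosed ?_
  intro x a hx hlim
  choose t ht w hw hxe using hx
  obtain ⟨R, hR⟩ := hlim.norm.bddAbove_range
  rw [mem_upperBounds] at hR
  have hRk : ∀ k, ‖x k‖ ≤ R := fun k => hR _ ⟨k, rfl⟩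
  have htb : ∀ k, t k ≤ R / m := by
    intro k
    rw [le_div_iff₀ hm0]
    calc t k * m ≤ t k * ‖w k‖ := by
          have := hmle (w k) (hw k); nlinarith [ht k]
      _ = ‖x k‖ := by rw [hxe k, norm_smul, Real.norm_eq_abs, abs_of_nonneg (ht k)]
      _ ≤ R := hRk k
  have hcpt2 : IsCompact ((Set.Icc (0:ℝ) (R/m)) ×ˢ (subdiff f xb)) :=
    isCompact_Icc.prod hcpt
  have hmemk : ∀ k, ((t k, w k) : ℝ × (EuclideanSpace ℝ (Fin n))) ∈
      (Set.Icc (0:ℝ) (R/m)) ×ˢ (subdiff f xb) := fun k =>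
    ⟨⟨ht k, htb k⟩, hw k⟩
  obtain ⟨⟨tinf, winf⟩, ⟨htm, hwm⟩, φ, hφ, hconv2⟩ := hcpt2.tendsto_subseq hmemk
  have h1 : Filter.Tendsto (fun k => t (φ k)) Filter.atTop (nhds tinf) :=
    (continuous_fst.tendsto _).comp hconv2
  have h2 : Filter.Tendsto (fun k => w (φ k)) Filter.atTop (nhds winf) :=
    (continuous_snd.tendsto _).comp hconv2
  have h3 : Filter.Tendsto (fun k => x (φ k)) Filter.atTop (nhds (tinf • winf)) := by
    refine (h1.smul h2).congr fun k => (hxe (φ k)).symm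
  have h4 : Filter.Tendsto (fun k => x (φ k)) Filter.atTop (nhds a) :=
    hlim.comp (hφ.tendsto_atTop)
  have ha : a = tinf • winf := tendsto_nhds_unique h4 h3
  exact ⟨tinf, htm.1, winf, hwm, ha⟩

lemma exists_proj (hne : (subdiff f xb).Nonempty) (h0 : (0:E) ∉ subdiff f xb) :
    ∃ p ∈ subdiff f xb, p ≠ (0:E) ∧ ∀ w ∈ subdiff f xb, ‖p‖^2 ≤ ⟪w, p⟫ := by
  have hScl : IsClosed (subdiff f xb) := isClosed_subdiff f xb
  have hScv : Convex ℝ (subdiff f xb) := convex_subdiff f xb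
  obtain ⟨v, hv, hnorm⟩ :=
    exists_norm_eq_iInf_of_complete_convex hne (hScl.isComplete) hScv (0:E)
  refine ⟨v, hv, fun hv0 => h0 (hv0 ▸ hv), ?_⟩
  intro w hw
  have key := (norm_eq_iInf_iff_real_inner_le_zero hScv hv).1 hnorm w hw
  rw [zero_sub, inner_sub_right, inner_neg_left, inner_neg_left] at key
  have : ⟪v, w⟫ ≥ ⟪v, v⟫ := by linarith
  rw [real_inner_self_eq_norm_sq] at this
  rw [real_inner_comm]
  linarith

end Cone

section Normal

variable {f : EuclideanSpace ℝ (Fin n) → ℝ} {xb : EuclideanSpace ℝ (Fin n)}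
variable (hconv : ConvexOn ℝ Set.univ f) (hf0 : f xb = 0)
include hconv hf0

lemma normal_inner_nonpos {p : E} (hp : p ∈ subdiff f xb) (hpne : p ≠ (0:E))
    (hpproj : ∀ w ∈ subdiff f xb, ‖p‖^2 ≤ ⟪w, p⟫)
    {u : E} (hu : u ∈ normalCone {z : E | f z ≤ 0} xb)
    {d : E} (hd : ∀ w ∈ subdiff f xb, ⟪w, d⟫ ≤ 0) : ⟪u, d⟫ ≤ 0 := by
  have hp2 : (0:ℝ) < ‖p‖^2 := by
    have := norm_pos_iff.2 hpne
    positivity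
  refine le_of_forall_pos_le_add ?_
  intro ε hε
  set s : ℝ := ε / (|⟪u, p⟫| + 1) with hs
  have hspos : 0 < s := by positivity
  set ds : E := d - s • p with hds
  have hdsneg : ∀ w ∈ subdiff f xb, ⟪w, ds⟫ < 0 := by
    intro w hw
    rw [hds, inner_sub_right, real_inner_smul_right]
    have := hpproj w hw
    have := hd w hw
    nlinarith
  have hdsne : ds ≠ (0:E) := by
    intro hc
    have := hdsneg p hp
    rw [hc, inner_zero_right] at this
    exact lt_irrefl 0 this
  obtain ⟨t, htpos, htneg⟩ := descent hconv hf0 ds hdsne hdsneg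
  have hmem : xb + t • ds ∈ {z : E | f z ≤ 0} := le_of_lt htneg
  have hnn := hu _ hmem
  rw [add_sub_cancel_left, real_inner_smul_right] at hnn
  have huds : ⟪u, ds⟫ ≤ 0 := by
    by_contra hcon
    push_neg at hcon
    nlinarith
  rw [hds, inner_sub_right, real_inner_smul_right] at huds
  have h1 : ⟪u, d⟫ ≤ s * ⟪u, p⟫ := by linarith
  have h2 : s * ⟪u, p⟫ ≤ s * (|⟪u, p⟫| + 1) := by
    have := le_abs_self ⟪u, p⟫
    nlinarith
  have h3 : s * (|⟪u, p⟫| + 1) = ε := by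
    rw [hs]
    field_simp
  linarith

lemma normal_unit_mem_cone (h0 : (0:E) ∉ subdiff f xb)
    (hne : (subdiff f xb).Nonempty) (hcpt : IsCompact (subdiff f xb))
    {u : E} (hu : u ∈ normalCone {z : E | f z ≤ 0} xb) (hu1 : ‖u‖ = 1) :
    ∃ w ∈ subdiff f xb, ∃ t : ℝ, 0 < t ∧ u = t • w := by
  obtain ⟨p, hp, hpne, hpproj⟩ := exists_proj hne h0
  have hKmem : u ∈ Kset f xb := by
    by_contra hKu
    obtain ⟨ℓ, c, hlt, hcu⟩ :=
      geometric_hahn_banach_closed_point (convex_Kset hne) (isClosed_Kset h0 hcpt) hKu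
    have hc0 : 0 < c := by
      have := hlt _ (zero_mem_Kset hne)
      simpa using this
    have hSneg : ∀ w ∈ subdiff f xb, ℓ w ≤ 0 := by
      intro w hw
      by_contra hcon
      push_neg at hcon
      have hmem : ∀ t : ℝ, 0 ≤ t → (t • w) ∈ Kset f xb := fun t htt => ⟨t, htt, w, hw, rfl⟩
      have hbig := hlt _ (hmem ((c + 1)/ℓ w) (by positivity))
      rw [map_smul, smul_eq_mul] at hbig
      rw [div_mul_cancel₀ _ (ne_of_gt hcon)] at hbig
      linarith
    set dv : E := (InnerProductSpace.toDual ℝ (EuclideanSpace ℝ (Fin n))).symm ℓ with hdv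
    have hd : ∀ w ∈ subdiff f xb, ⟪w, dv⟫ ≤ 0 := by
      intro w hw
      rw [real_inner_comm]
      rw [hdv, InnerProductSpace.toDual_symm_apply]
      exact hSneg w hw
    have hfin := normal_inner_nonpos hconv hf0 hp hpne hpproj hu hd
    rw [real_inner_comm, hdv, InnerProductSpace.toDual_symm_apply] at hfin
    linarith
  obtain ⟨t, ht, w, hw, rfl⟩ := hKmem
  rcases eq_or_lt_of_le ht with h | h
  · exfalso
    rw [← h, zero_smul, norm_zero] at hu1
    norm_num at hu1
  · exact ⟨w, hw, t, h, rfl⟩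

end Normal

section Bound

variable {f : EuclideanSpace ℝ (Fin n) → ℝ} {xb : EuclideanSpace ℝ (Fin n)}

lemma subgrad_norm_le (hf0 : f xb = 0) {B : ℝ}
    (hB : ∀ z ∈ Metric.closedBall xb 2, f z ≤ B)
    {x : E} (hx : ‖x - xb‖ ≤ 1) (hfx : 0 ≤ f x) {y : E} (hy : y ∈ subdiff f x) :
    ‖y‖ ≤ B := by
  have hB0 : 0 ≤ B := by
    have := hB xb (Metric.mem_closedBall_self (by norm_num))
    rw [hf0] at this
    exact this
  rcases eq_or_ne y 0 with rfl | hyne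
  · simpa using hB0
  have hyn : 0 < ‖y‖ := norm_pos_iff.2 hyne
  set z : E := x + ‖y‖⁻¹ • y with hz
  have hzy : ⟪y, z - x⟫ = ‖y‖ := by
    rw [hz, add_sub_cancel_left, real_inner_smul_right, real_inner_self_eq_norm_sq]
    field_simp
  have hzball : z ∈ Metric.closedBall xb 2 := by
    rw [Metric.mem_closedBall, dist_eq_norm]
    have : z - xb = (x - xb) + ‖y‖⁻¹ • y := by rw [hz]; abel
    rw [this]
    have h1 : ‖(‖y‖⁻¹ • y : E)‖ = 1 := by
      rw [norm_smul, norm_inv, norm_norm, inv_mul_cancel₀ hyn.ne']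
    calc ‖(x - xb) + ‖y‖⁻¹ • y‖ ≤ ‖x - xb‖ + ‖(‖y‖⁻¹ • y : E)‖ := norm_add_le _ _
      _ ≤ 1 + 1 := by rw [h1]; linarith
      _ = 2 := by norm_num
  have := hy z
  rw [hzy] at this
  have := hB z hzball
  linarith

end Bound

end IIT2

open IIT2

/-- Second intermediate inequality: subgradients at nearby points make a
uniformly positive inner product with the (approximately normal) direction. -/
theorem intermediate_inequality_two
    {n : ℕ} (f : EuclideanSpace ℝ (Fin n) → ℝ)
    (hconv : ConvexOn ℝ Set.univ f)
    (xbar : EuclideanSpace ℝ (Fin n)) (hf0 : f xbar = 0)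
    (h0 : (0:EuclideanSpace ℝ (Fin n)) ∉ subdiff f xbar)
    (γ₂ : ℝ)
    (hγ₂ : γ₂ < Metric.infDist 0 (subdiff f xbar) / sSup (norm '' subdiff f xbar)) :
    ∃ ε > (0:ℝ), ∀ x : EuclideanSpace ℝ (Fin n),
      ‖x - xbar‖ < ε → 0 < f x →
      Metric.infDist (‖x - xbar‖⁻¹ • (x - xbar)) (normalCone {z | f z ≤ 0} xbar) < ε →
      ∀ y ∈ subdiff f x, γ₂ < ⟪‖y‖⁻¹ • y, ‖x - xbar‖⁻¹ • (x - xbar)⟫ := by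
  classical
  rcases le_or_gt γ₂ 0 with hγn | hγp
  · -- trivial case
    refine ⟨1, one_pos, ?_⟩
    intro x hx1 hx2 hx3 y hy
    have hxne : x ≠ xbar := by
      intro h; rw [h, hf0] at hx2; exact lt_irrefl 0 hx2
    have htpos : 0 < ‖x - xbar‖ := by
      rw [norm_pos_iff, sub_ne_zero]; exact hxne
    have hkey : f x ≤ ⟪y, x - xbar⟫ := by
      have h1 := hy xbar
      rw [hf0] at h1
      have e : ⟪y, xbar - x⟫ = -⟪y, x - xbar⟫ := by
        rw [show xbar - x = -(x - xbar) from (neg_sub _ _).symm, inner_neg_right]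
      rw [e] at h1
      linarith
    have hypos : (0:ℝ) < ⟪y, x - xbar⟫ := lt_of_lt_of_le hx2 hkey
    have hyne : y ≠ 0 := by
      rintro rfl; rw [inner_zero_left] at hypos; exact lt_irrefl 0 hypos
    have hyn : 0 < ‖y‖ := norm_pos_iff.2 hyne
    have e2 : ⟪‖y‖⁻¹ • y, ‖x - xbar‖⁻¹ • (x - xbar)⟫
        = ‖y‖⁻¹ * (‖x - xbar‖⁻¹ * ⟪y, x - xbar⟫) := by
      rw [real_inner_smul_left, real_inner_smul_right]
    rw [e2]
    calc γ₂ ≤ 0 := hγn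
      _ < _ := by positivity
  · -- main case
    by_contra hcon
    push_neg at hcon
    -- dispatch n = 0
    rcases Nat.eq_zero_or_pos n with hn0 | hnpos
    · subst hn0
      obtain ⟨x, hx1, hx2, -⟩ := hcon 1 one_pos
      have hxx : x = xbar := PiLp.ext fun i => i.elim0
      rw [hxx, hf0] at hx2
      exact lt_irrefl 0 hx2
    -- continuity and upper bound on a ball
    have hfc : Continuous f := by
      have h1 := hconv.continuousOn isOpen_univ
      rwa [continuousOn_univ] at h1
    obtain ⟨z₀, hz₀, hz₀max⟩ := (isCompact_closedBall xbar 2).exists_isMaxOn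
      ⟨xbar, Metric.mem_closedBall_self (by norm_num)⟩ hfc.continuousOn
    rw [isMaxOn_iff] at hz₀max
    set B := f z₀ with hBdef
    have hB : ∀ z ∈ Metric.closedBall xbar 2, f z ≤ B := hz₀max
    -- the subdifferential at xbar is nonempty and compact
    have hne : (subdiff f xbar).Nonempty := by
      set e₀ : EuclideanSpace ℝ (Fin n) := EuclideanSpace.single ⟨0, hnpos⟩ 1 with he₀def
      have he₀ : e₀ ≠ 0 := by
        intro hc
        have h1 : ‖e₀‖ = 1 := by rw [he₀def, EuclideanSpace.norm_single, norm_one]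
        rw [hc, norm_zero] at h1
        norm_num at h1
      obtain ⟨w, hw, -⟩ := exists_subgrad hconv hf0 e₀ he₀
      exact ⟨w, hw⟩
    have hSbd : ∀ y ∈ subdiff f xbar, ‖y‖ ≤ B := fun y hy =>
      subgrad_norm_le hf0 hB (by simp) (le_of_eq hf0.symm) hy
    have hcpt : IsCompact (subdiff f xbar) := by
      refine Metric.isCompact_of_isClosed_isBounded (isClosed_subdiff f xbar) ?_
      rw [isBounded_iff_forall_norm_le]
      exact ⟨B, hSbd⟩
    set m := Metric.infDist (0:EuclideanSpace ℝ (Fin n)) (subdiff f xbar) with hmdef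
    set M := sSup (norm '' subdiff f xbar) with hMdef
    have hbdd : BddAbove (norm '' subdiff f xbar) := by
      refine ⟨B, ?_⟩
      rintro _ ⟨yy, hyy, rfl⟩
      exact hSbd yy hyy
    have hMle : ∀ y ∈ subdiff f xbar, ‖y‖ ≤ M := fun y hy =>
      le_csSup hbdd (Set.mem_image_of_mem _ hy)
    have hM0 : 0 < M := by
      obtain ⟨w₁, hw₁⟩ := hne
      have h1 : 0 ≤ M := le_trans (norm_nonneg w₁) (hMle w₁ hw₁)
      rcases eq_or_lt_of_le h1 with h2 | h2
      · rw [← h2, div_zero] at hγ₂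
        linarith
      · exact h2
    have hm0 : 0 < m := by
      have h1 : 0 < m / M := lt_trans hγp hγ₂
      by_contra h2
      push_neg at h2
      have : m / M ≤ 0 := div_nonpos_of_nonpos_of_nonneg h2 hM0.le
      linarith
    -- extract sequences
    have hseq : ∀ k : ℕ, ∃ x : EuclideanSpace ℝ (Fin n), ‖x - xbar‖ < 1/(k+1) ∧ 0 < f x ∧
        Metric.infDist (‖x - xbar‖⁻¹ • (x - xbar)) (normalCone {z | f z ≤ 0} xbar) < 1/(k+1) ∧
        ∃ y ∈ subdiff f x, ⟪‖y‖⁻¹ • y, ‖x - xbar‖⁻¹ • (x - xbar)⟫ ≤ γ₂ := fun k =>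
      hcon (1/(k+1)) (by positivity)
    choose x hx1 hx2 hx3 y hy hyle using hseq
    set u : ℕ → EuclideanSpace ℝ (Fin n) := fun k => ‖x k - xbar‖⁻¹ • (x k - xbar) with hudef
    have htpos : ∀ k, 0 < ‖x k - xbar‖ := by
      intro k
      rw [norm_pos_iff, sub_ne_zero]
      intro h
      have h2 := hx2 k
      rw [h, hf0] at h2
      exact lt_irrefl 0 h2
    have hu1 : ∀ k, ‖u k‖ = 1 := by
      intro k
      rw [hudef]
      simp only
      rw [norm_smul, norm_inv, norm_norm, inv_mul_cancel₀ (htpos k).ne']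
    have hybd : ∀ k, ‖y k‖ ≤ B := by
      intro k
      refine subgrad_norm_le hf0 hB ?_ (hx2 k).le (hy k)
      have h1 : (1:ℝ)/(k+1) ≤ 1 := by
        rw [div_le_one (by positivity)]
        norm_num
      linarith [hx1 k]
    -- compactness: extract convergent subsequence of (y k, u k)
    have hcpt2 : IsCompact ((Metric.closedBall (0:EuclideanSpace ℝ (Fin n)) B) ×ˢ
        (Metric.sphere (0:EuclideanSpace ℝ (Fin n)) 1)) :=
      (isCompact_closedBall _ _).prod (isCompact_sphere _ _)
    have hmem : ∀ k, ((y k, u k) : EuclideanSpace ℝ (Fin n) × EuclideanSpace ℝ (Fin n)) ∈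
        (Metric.closedBall (0:EuclideanSpace ℝ (Fin n)) B) ×ˢ
        (Metric.sphere (0:EuclideanSpace ℝ (Fin n)) 1) := by
      intro k
      constructor
      · rw [Metric.mem_closedBall, dist_zero_right]
        exact hybd k
      · rw [Metric.mem_sphere, dist_zero_right]
        exact hu1 k
    obtain ⟨⟨ys, us⟩, ⟨hysb, husb⟩, φ, hφ, hconv2⟩ := hcpt2.tendsto_subseq hmem
    have hy_lim : Filter.Tendsto (fun k => y (φ k)) Filter.atTop (nhds ys) :=
      (continuous_fst.tendsto _).comp hconv2
    have hu_lim : Filter.Tendsto (fun k => u (φ k)) Filter.atTop (nhds us) :=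
      (continuous_snd.tendsto _).comp hconv2
    have hone : Filter.Tendsto (fun k : ℕ => 1/((k:ℝ)+1)) Filter.atTop (nhds 0) :=
      tendsto_one_div_add_atTop_nhds_zero_nat
    have hx_lim : Filter.Tendsto (fun k => x (φ k)) Filter.atTop (nhds xbar) := by
      rw [tendsto_iff_norm_sub_tendsto_zero]
      refine squeeze_zero (fun k => norm_nonneg _) (fun k => ?_) (hone.comp hφ.tendsto_atTop)
      exact (hx1 (φ k)).le
    -- limit point ys is a subgradient of f at xbar
    have hysS : ys ∈ subdiff f xbar := by
      intro z
      rw [hf0, zero_add]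
      have hk : ∀ k, ⟪y (φ k), z - x (φ k)⟫ ≤ f z := by
        intro k
        have h1 := hy (φ k) z
        linarith [hx2 (φ k)]
      have htend : Filter.Tendsto (fun k => ⟪y (φ k), z - x (φ k)⟫) Filter.atTop
          (nhds ⟪ys, z - xbar⟫) :=
        hy_lim.inner (tendsto_const_nhds.sub hx_lim)
      exact le_of_tendsto htend (Filter.Eventually.of_forall hk)
    -- limit direction us is in the normal cone
    set N := normalCone {z : EuclideanSpace ℝ (Fin n) | f z ≤ 0} xbar with hNdef
    have hN0 : (0:EuclideanSpace ℝ (Fin n)) ∈ N := by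
      intro z hz
      rw [inner_zero_left]
      
    have hNcl : IsClosed N := by
      have hNeq : N = ⋂ z ∈ {z : EuclideanSpace ℝ (Fin n) | f z ≤ 0},
          {v : EuclideanSpace ℝ (Fin n) | ⟪v, z - xbar⟫ ≤ 0} := by
        ext v
        simp only [hNdef, normalCone, Set.mem_setOf_eq, Set.mem_iInter]
      rw [hNeq]
      exact isClosed_biInter fun z hz =>
        isClosed_le (continuous_id.inner continuous_const) continuous_const
    have husN : us ∈ N := by
      have hd1 : Filter.Tendsto (fun k => Metric.infDist (u (φ k)) N) Filter.atTop
          (nhds (Metric.infDist us N)) :=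
        ((Metric.continuous_infDist_pt (N : Set (EuclideanSpace ℝ (Fin n)))).tendsto us).comp hu_lim
      have hd2 : Filter.Tendsto (fun k => Metric.infDist (u (φ k)) N) Filter.atTop (nhds 0) := by
        refine squeeze_zero (fun k => Metric.infDist_nonneg) (fun k => ?_)
          (hone.comp hφ.tendsto_atTop)
        exact (hx3 (φ k)).le
      have := tendsto_nhds_unique hd1 hd2
      exact (hNcl.mem_iff_infDist_zero ⟨0, hN0⟩).2 this
    have hus1 : ‖us‖ = 1 := by
      rw [Metric.mem_sphere, dist_zero_right] at husb
      exact husb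
    -- us is a positive multiple of a subgradient
    obtain ⟨w₀, hw₀S, t₀, ht₀, husw⟩ :=
      normal_unit_mem_cone hconv hf0 h0 hne hcpt husN hus1
    have hw₀m : m ≤ ‖w₀‖ := by
      have := Metric.infDist_le_dist_of_mem (x := (0:EuclideanSpace ℝ (Fin n))) hw₀S
      rwa [dist_zero_left] at this
    -- monotonicity inequality in the limit
    have hinner_ge : ∀ w ∈ subdiff f xbar, (0:ℝ) ≤ ⟪ys - w, us⟫ := by
      intro w hw
      have hk : ∀ k, (0:ℝ) ≤ ⟪y (φ k) - w, u (φ k)⟫ := by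
        intro k
        have h1 := hy (φ k) xbar
        rw [hf0] at h1
        have e1 : ⟪y (φ k), xbar - x (φ k)⟫ = -⟪y (φ k), x (φ k) - xbar⟫ := by
          rw [show xbar - x (φ k) = -(x (φ k) - xbar) from (neg_sub _ _).symm, inner_neg_right]
        rw [e1] at h1
        have h2 := hw (x (φ k))
        rw [hf0, zero_add] at h2
        have h3 : (0:ℝ) ≤ ⟪y (φ k) - w, x (φ k) - xbar⟫ := by
          rw [inner_sub_left]
          linarith
        have e2 : ⟪y (φ k) - w, u (φ k)⟫
            = ‖x (φ k) - xbar‖⁻¹ * ⟪y (φ k) - w, x (φ k) - xbar⟫ := by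
          rw [hudef]
          simp only
          rw [real_inner_smul_right]
        rw [e2]
        have := (htpos (φ k))
        positivity
      have htend : Filter.Tendsto (fun k => ⟪y (φ k) - w, u (φ k)⟫) Filter.atTop
          (nhds ⟪ys - w, us⟫) :=
        (hy_lim.sub tendsto_const_nhds).inner hu_lim
      exact ge_of_tendsto htend (Filter.Eventually.of_forall hk)
    have hkey : m ≤ ⟪ys, us⟫ := by
      have h1 := hinner_ge w₀ hw₀S
      rw [inner_sub_left] at h1
      have h2 : ⟪w₀, us⟫ = ‖w₀‖ := by
        rw [husw, real_inner_smul_right, real_inner_self_eq_norm_sq]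
        have h3 : ‖us‖ = t₀ * ‖w₀‖ := by
          rw [husw, norm_smul, Real.norm_eq_abs, abs_of_pos ht₀]
        rw [hus1] at h3
        nlinarith [norm_nonneg w₀]
      linarith [hw₀m, h1, h2.symm ▸ h1]
    have hysn : 0 < ‖ys‖ := by
      rcases eq_or_ne ys 0 with h | h
      · exfalso
        rw [h, inner_zero_left] at hkey
        linarith
      · exact norm_pos_iff.2 h
    have hysM : ‖ys‖ ≤ M := hMle ys hysS
    -- limit of the contradiction inequalities
    have hlimf : Filter.Tendsto (fun k => ⟪‖y (φ k)‖⁻¹ • y (φ k), u (φ k)⟫) Filter.atTop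
        (nhds (‖ys‖⁻¹ * ⟪ys, us⟫)) := by
      have h1 : Filter.Tendsto (fun k => ‖y (φ k)‖⁻¹) Filter.atTop (nhds ‖ys‖⁻¹) :=
        (hy_lim.norm).inv₀ hysn.ne'
      have h2 : Filter.Tendsto (fun k => ⟪y (φ k), u (φ k)⟫) Filter.atTop (nhds ⟪ys, us⟫) :=
        hy_lim.inner hu_lim
      refine (h1.mul h2).congr fun k => ?_
      rw [real_inner_smul_left]
    have hfinal : ‖ys‖⁻¹ * ⟪ys, us⟫ ≤ γ₂ :=
      le_of_tendsto hlimf (Filter.Eventually.of_forall fun k => hyle (φ k))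
    -- contradiction
    have hc1 : m / M ≤ m / ‖ys‖ := div_le_div_of_nonneg_left hm0.le hysn hysM
    have hc2 : m / ‖ys‖ ≤ ⟪ys, us⟫ / ‖ys‖ := by
      gcongr
    have hc3 : ⟪ys, us⟫ / ‖ys‖ = ‖ys‖⁻¹ * ⟪ys, us⟫ := by
      rw [div_eq_inv_mul]
    linarith
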